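/- The zero set Z(p) ⊆ E of a circle p (a ≠ 0) consists of exactly one point if and only if p is a zero circle (has size 0), in which case the unique zero is the center of p. -/

import Mathlib

/-- The zero set of a circle `p = a(X·X)+b·X+c` (`a ≠ 0`) consists of exactly one point
iff `p` is a zero circle (size `0`), in which case the unique zero is the center
`-b/(2a)`. -/
theorem stmt_7 {k : Type*} [Field k] (hchar : (2 : k) ≠ 0)
    {E : Type*} [AddCommGroup E] [Module k E]
    (B : LinearMap.BilinForm k E) (hB : B.IsSymm)
    (haniso : ∀ x : E, B x x = 0 → x = 0)
    (a c : k) (b : E) (ha : a ≠ 0) :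
    ((∃! x : E, a * B x x + B b x + c = 0) ↔
        (B b b - 4 * a * c) / (4 * a ^ 2) = 0) ∧
    ((B b b - 4 * a * c) / (4 * a ^ 2) = 0 →
      ∀ x : E, a * B x x + B b x + c = 0 ↔ x = -((2 * a)⁻¹ • b)) := by
  have h2a : (2 : k) * a ≠ 0 := mul_ne_zero hchar ha
  have h4 : (4 : k) * a ^ 2 ≠ 0 := by
    rw [show (4 : k) = 2 * 2 by norm_num]
    exact mul_ne_zero (mul_ne_zero hchar hchar) (pow_ne_zero 2 ha)
  set s : k := (B b b - 4 * a * c) / (4 * a ^ 2) with hs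
  set u : k := (2 * a)⁻¹ with hu
  have h1 : 2 * a * u = 1 := mul_inv_cancel₀ h2a
  have key : ∀ x : E, a * B x x + B b x + c
      = a * (B (x + u • b) (x + u • b) - s) := by
    intro x
    have hbx : B b x = B x b := hB.eq b x
    have hs' : s = u ^ 2 * (B b b - 4 * a * c) := by
      rw [hs, div_eq_iff h4]
      linear_combination (-(B b b - 4 * a * c) * (1 + 2 * a * u)) * h1
    simp only [map_add, map_smul, LinearMap.add_apply, LinearMap.smul_apply, smul_eq_mul]
    rw [hbx, hs']
    linear_combination (-(B x) b - c * (1 + 2 * a * u)) * h1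
  have hzero : ∀ x : E, (a * B x x + B b x + c = 0) ↔ B (x + u • b) (x + u • b) = s := by
    intro x
    rw [key x, mul_eq_zero, sub_eq_zero]
    exact ⟨fun h => h.resolve_left ha, Or.inr⟩
  have part2 : s = 0 → ∀ x : E, (a * B x x + B b x + c = 0) ↔ x = -(u • b) := by
    intro hs0 x
    rw [hzero x, hs0]
    constructor
    · intro h
      exact eq_neg_of_add_eq_zero_left (haniso _ h)
    · rintro rfl
      simp
  refine ⟨⟨?_, ?_⟩, part2⟩
  · rintro ⟨x, hx, hun⟩
    set x' : E := -((2 : k) • (u • b)) - x with hx'def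
    have hy : x' + u • b = -(x + u • b) := by
      rw [hx'def, two_smul]
      abel
    have hx' : a * B x' x' + B b x' + c = 0 := by
      rw [hzero, hy]
      simp only [map_neg, LinearMap.neg_apply, neg_neg]
      exact (hzero x).mp hx
    have hxx : x' = x := hun x' hx'
    have h2x : (2 : k) • x = (2 : k) • (-(u • b)) := by
      have : x + x = -((2 : k) • (u • b)) := by
        nth_rewrite 1 [← hxx]
        rw [hx'def]; abel
      rw [two_smul, this, smul_neg]
    have hxc : x = -(u • b) := smul_right_injective E hchar h2x
    have := (hzero x).mp hx
    rw [hxc] at this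
    simp only [neg_add_cancel, map_zero, LinearMap.zero_apply] at this
    exact this.symm
  · intro hs0
    exact ⟨-(u • b), (part2 hs0 _).mpr rfl, fun y hy => (part2 hs0 y).mp hy⟩
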